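/- Let A be a unital C*-algebra and a, b positive invertible elements of A. Then the Thompson metric satisfies d_T(a, b) = ‖log(a^{-1/2} b a^{-1/2})‖. -/

import Mathlib

/-- `M(x/y) = inf {β > 0 : x ≤ β y}`. -/
noncomputable def Mrel {A : Type*} [NormedRing A] [NormedAlgebra ℂ A]
    [PartialOrder A] (x y : A) : ℝ :=
  sInf {β : ℝ | 0 < β ∧ x ≤ β • y}

/-- The Thompson metric `d_T(x,y) = log (max {M(x/y), M(y/x)})`. -/
noncomputable def thompsonDist {A : Type*} [NormedRing A] [NormedAlgebra ℂ A]
    [PartialOrder A] (x y : A) : ℝ :=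
  Real.log (max (Mrel x y) (Mrel y x))

/-- The inverse square root `x^{-1/2}` via the continuous functional calculus. -/
noncomputable def invSqrt {A : Type*} [CStarAlgebra A] (x : A) : A :=
  cfc (fun t : ℝ => (Real.sqrt t)⁻¹) x

private lemma sInf_pos_le_eq {M : ℝ} (hM : 0 < M) :
    sInf {β : ℝ | 0 < β ∧ M ≤ β} = M := by
  have h : {β : ℝ | 0 < β ∧ M ≤ β} = Set.Ici M := by
    ext β
    exact ⟨fun h => h.2, fun h => ⟨hM.trans_le h, h⟩⟩
  rw [h, csInf_Ici]

private lemma isGreatest_abs_log {K : Set ℝ} (hK : IsCompact K) (hne : K.Nonempty)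
    (hpos : ∀ t ∈ K, 0 < t) :
    IsGreatest ((fun t => |Real.log t|) '' K) (Real.log (max (sInf K)⁻¹ (sSup K))) := by
  set m := sInf K with hm_def
  set M := sSup K with hM_def
  have hm_mem : m ∈ K := hK.sInf_mem hne
  have hM_mem : M ∈ K := hK.sSup_mem hne
  have hm_pos : 0 < m := hpos m hm_mem
  have hM_pos : 0 < M := hpos M hM_mem
  have hmM : m ≤ M := csInf_le_csSup hne hK.bddBelow hK.bddAbove
  constructor
  · rcases le_total m⁻¹ M with h | h
    · have h1M : 1 ≤ M := by nlinarith [mul_inv_cancel₀ hm_pos.ne']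
      refine ⟨M, hM_mem, ?_⟩
      show |Real.log M| = Real.log (max m⁻¹ M)
      rw [abs_of_nonneg (Real.log_nonneg h1M), max_eq_right h]
    · have hm1 : m ≤ 1 := by nlinarith [mul_inv_cancel₀ hm_pos.ne']
      refine ⟨m, hm_mem, ?_⟩
      show |Real.log m| = Real.log (max m⁻¹ M)
      rw [abs_of_nonpos (Real.log_nonpos hm_pos.le hm1), max_eq_left h, Real.log_inv]
  · rintro x ⟨t, ht, rfl⟩
    have htpos := hpos t ht
    rw [abs_le]
    constructor
    · have h1 : Real.log m ≤ Real.log t := Real.log_le_log hm_pos (csInf_le hK.bddBelow ht)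
      have h2 : Real.log m⁻¹ ≤ Real.log (max m⁻¹ M) :=
        Real.log_le_log (inv_pos.mpr hm_pos) (le_max_left _ _)
      rw [Real.log_inv] at h2
      linarith
    · exact (Real.log_le_log htpos (le_csSup hK.bddAbove ht)).trans
        (Real.log_le_log hM_pos (le_max_right _ _))

private lemma spec_pos_of_unit {A : Type*} [CStarAlgebra A] [PartialOrder A]
    [StarOrderedRing A] {x : A} (hx : 0 ≤ x) (hu : IsUnit x) :
    ∀ t ∈ spectrum ℝ x, 0 < t := by
  intro t ht
  rcases (spectrum_nonneg_of_nonneg hx ht).lt_or_eq with h | h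
  · exact h
  · exact absurd (h ▸ ht) (spectrum.zero_notMem ℝ hu)

/-- For positive invertible elements `a, b` of a unital C*-algebra, the Thompson
metric satisfies `d_T(a, b) = ‖log (a^{-1/2} b a^{-1/2})‖`. -/
theorem thompson_metric_eq_norm_log
    {A : Type*} [CStarAlgebra A] [PartialOrder A] [StarOrderedRing A]
    (a b : Aˣ) (ha : 0 ≤ (a : A)) (hb : 0 ≤ (b : A)) :
    thompsonDist (a : A) (b : A)
      = ‖cfc Real.log (invSqrt (a : A) * (b : A) * invSqrt (a : A))‖ := by
  rcases subsingleton_or_nontrivial A with hA | hA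
  · have hle : ∀ x y : A, x ≤ y := fun x y => le_of_eq (Subsingleton.elim x y)
    have hM : ∀ x y : A, Mrel x y = 0 := fun x y => by
      have h : {β : ℝ | 0 < β ∧ x ≤ β • y} = Set.Ioi 0 := by
        ext β
        simp only [Set.mem_setOf_eq, Set.mem_Ioi, and_iff_left_iff_imp]
        exact fun _ => hle _ _
      rw [Mrel, h, csInf_Ioi]
    have h0 : cfc Real.log (invSqrt (a : A) * (b : A) * invSqrt (a : A)) = 0 :=
      Subsingleton.elim _ _
    rw [thompsonDist, hM, hM, h0, norm_zero, max_self, Real.log_zero]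
  -- nontrivial case
  have ha_sa : IsSelfAdjoint (a : A) := .of_nonneg ha
  have ha_spec : ∀ t ∈ spectrum ℝ (a : A), 0 < t := spec_pos_of_unit ha a.isUnit
  have hsqrt_ne : ∀ t ∈ spectrum ℝ (a : A), Real.sqrt t ≠ 0 := fun t ht =>
    (Real.sqrt_pos.mpr (ha_spec t ht)).ne'
  have hf_cont : ContinuousOn (fun t : ℝ => (Real.sqrt t)⁻¹) (spectrum ℝ (a : A)) :=
    Real.continuous_sqrt.continuousOn.inv₀ hsqrt_ne
  have hr_cont : ContinuousOn Real.sqrt (spectrum ℝ (a : A)) :=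
    Real.continuous_sqrt.continuousOn
  set s : A := invSqrt (a : A) with hs_def
  set r : A := cfc Real.sqrt (a : A) with hr_def
  have hs_sa : IsSelfAdjoint s := by rw [hs_def, invSqrt]; exact cfc_predicate _ _
  have hr_sa : IsSelfAdjoint r := cfc_predicate _ _
  have hrs : r * s = 1 := by
    have h1 : cfc (fun x : ℝ => Real.sqrt x * (Real.sqrt x)⁻¹) (a : A)
        = cfc (fun _ : ℝ => (1 : ℝ)) (a : A) :=
      cfc_congr fun t ht => mul_inv_cancel₀ (hsqrt_ne t ht)
    rw [hs_def, invSqrt, hr_def, ← cfc_mul _ _ _ hr_cont hf_cont, h1,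
      cfc_const 1 (a : A) ha_sa, map_one]
  have hsr : s * r = 1 := by
    have h1 : cfc (fun x : ℝ => (Real.sqrt x)⁻¹ * Real.sqrt x) (a : A)
        = cfc (fun _ : ℝ => (1 : ℝ)) (a : A) :=
      cfc_congr fun t ht => inv_mul_cancel₀ (hsqrt_ne t ht)
    rw [hs_def, invSqrt, hr_def, ← cfc_mul _ _ _ hf_cont hr_cont, h1,
      cfc_const 1 (a : A) ha_sa, map_one]
  have hrr : r * r = (a : A) := by
    have h1 : cfc (fun x : ℝ => Real.sqrt x * Real.sqrt x) (a : A) = cfc (id : ℝ → ℝ) (a : A) :=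
      cfc_congr fun t ht => Real.mul_self_sqrt (ha_spec t ht).le
    rw [hr_def, ← cfc_mul _ _ _ hr_cont hr_cont, h1, cfc_id ℝ (a : A) ha_sa]
  have hsas : s * (a : A) * s = 1 := by
    have h1 : s * (a : A) = r := by
      conv_lhs => rw [← cfc_id ℝ (a : A) ha_sa]
      rw [hs_def, invSqrt, ← cfc_mul _ _ _ hf_cont continuousOn_id, hr_def]
      exact cfc_congr fun t ht => by
        have h := Real.mul_self_sqrt (ha_spec t ht).le
        have h2 := hsqrt_ne t ht
        field_simp
        simp only [id, sq, h]
    rw [h1, hrs]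
  -- cancellation helpers
  have hsr₁ : ∀ x : A, s * (r * x) = x := fun x => by rw [← mul_assoc, hsr, one_mul]
  have hrs₁ : ∀ x : A, r * (s * x) = x := fun x => by rw [← mul_assoc, hrs, one_mul]
  have hb₁ : ∀ x : A, (b : A) * ((↑b⁻¹ : A) * x) = x := fun x => by
    rw [← mul_assoc, Units.mul_inv, one_mul]
  have hb₂ : ∀ x : A, (↑b⁻¹ : A) * ((b : A) * x) = x := fun x => by
    rw [← mul_assoc, Units.inv_mul, one_mul]
  set c : A := s * (b : A) * s with hc_def
  have hc_nonneg : 0 ≤ c := by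
    have := star_left_conjugate_nonneg hb s
    rwa [hs_sa.star_eq] at this
  have hc_sa : IsSelfAdjoint c := .of_nonneg hc_nonneg
  have hcu : IsUnit c := by
    refine ⟨⟨c, r * (↑b⁻¹ : A) * r, ?_, ?_⟩, rfl⟩
    · show (s * (b : A) * s) * (r * (↑b⁻¹ : A) * r) = 1
      simp only [mul_assoc, hsr₁, hb₁, hsr]
    · show (r * (↑b⁻¹ : A) * r) * (s * (b : A) * s) = 1
      simp only [mul_assoc, hrs₁, hb₂, hrs]
  have hc_spec : ∀ t ∈ spectrum ℝ c, 0 < t := spec_pos_of_unit hc_nonneg hcu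
  have hK : IsCompact (spectrum ℝ c) := ContinuousFunctionalCalculus.isCompact_spectrum c
  have hne : (spectrum ℝ c).Nonempty := CFC.spectrum_nonempty ℝ c hc_sa
  set m : ℝ := sInf (spectrum ℝ c) with hm_def
  set M : ℝ := sSup (spectrum ℝ c) with hM_def
  have hm_mem : m ∈ spectrum ℝ c := hK.sInf_mem hne
  have hM_mem : M ∈ spectrum ℝ c := hK.sSup_mem hne
  have hm_pos : 0 < m := hc_spec m hm_mem
  have hM_pos : 0 < M := hc_spec M hM_mem
  -- r * c * r = b
  have hrcr : r * c * r = (b : A) := by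
    rw [hc_def]
    simp only [mul_assoc, hrs₁, hsr, mul_one]
  -- smul conjugation helpers
  have hconj_smul_s : ∀ (x : A) (β : ℝ), s * (β • x) * s = β • (s * x * s) := fun x β => by
    rw [mul_smul_comm, smul_mul_assoc]
  have hconj_smul_r : ∀ (x : A) (β : ℝ), r * (β • x) * r = β • (r * x * r) := fun x β => by
    rw [mul_smul_comm, smul_mul_assoc]
  -- first equivalence : b ≤ β • a ↔ c ≤ algebraMap β
  have equiv1 : ∀ β : ℝ, (b : A) ≤ β • (a : A) ↔ c ≤ algebraMap ℝ A β := by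
    intro β
    constructor
    · intro h
      have h2 := hs_sa.conjugate_le_conjugate h
      rwa [hconj_smul_s, hsas, ← Algebra.algebraMap_eq_smul_one] at h2
    · intro h
      have h2 := hr_sa.conjugate_le_conjugate h
      rw [hrcr] at h2
      rwa [Algebra.algebraMap_eq_smul_one, hconj_smul_r, mul_one, hrr] at h2
  -- second equivalence : a ≤ β • b ↔ 1 ≤ β • c
  have equiv2 : ∀ β : ℝ, (a : A) ≤ β • (b : A) ↔ (1 : A) ≤ β • c := by
    intro β
    constructor
    · intro h
      have h2 := hs_sa.conjugate_le_conjugate h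
      rwa [hconj_smul_s, hsas, ← hc_def] at h2
    · intro h
      have h2 := hr_sa.conjugate_le_conjugate h
      rwa [hconj_smul_r, hrcr, mul_one, hrr] at h2
  -- spectral characterization of 1 ≤ β • c
  have h1c : ∀ β : ℝ, (1 : A) ≤ β • c ↔ ∀ t ∈ spectrum ℝ c, 1 ≤ β * t := by
    intro β
    have hβc : β • c = cfc (fun t : ℝ => β * t) c := by
      rw [cfc_const_mul β (fun t : ℝ => t) c continuousOn_id, cfc_id' ℝ c hc_sa]
    rw [hβc, ← map_one (algebraMap ℝ A),
      algebraMap_le_cfc_iff (fun t : ℝ => β * t) 1 c (by fun_prop) hc_sa]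
  -- compute Mrel b a
  have hMba : Mrel (b : A) (a : A) = M := by
    have hset : {β : ℝ | 0 < β ∧ (b : A) ≤ β • (a : A)} = {β : ℝ | 0 < β ∧ M ≤ β} := by
      ext β
      simp only [Set.mem_setOf_eq]
      refine and_congr_right fun hβ => ?_
      rw [equiv1 β, le_algebraMap_iff_spectrum_le hc_sa,
        ← csSup_le_iff hK.bddAbove hne, ← hM_def]
    rw [Mrel, hset, sInf_pos_le_eq hM_pos]
  -- compute Mrel a b
  have hMab : Mrel (a : A) (b : A) = m⁻¹ := by
    have hset : {β : ℝ | 0 < β ∧ (a : A) ≤ β • (b : A)} = {β : ℝ | 0 < β ∧ m⁻¹ ≤ β} := by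
      ext β
      simp only [Set.mem_setOf_eq]
      refine and_congr_right fun hβ => ?_
      rw [equiv2 β, h1c β]
      constructor
      · intro h
        have h1 := h m hm_mem
        have h2 := mul_inv_cancel₀ hm_pos.ne'
        nlinarith
      · intro h t ht
        have hmt : m ≤ t := csInf_le hK.bddBelow ht
        have h2 := mul_inv_cancel₀ hm_pos.ne'
        nlinarith
    rw [Mrel, hset, sInf_pos_le_eq (inv_pos.mpr hm_pos)]
  -- norm of the logarithm
  have hlog_cont : ContinuousOn Real.log (spectrum ℝ c) := fun t ht =>
    (Real.continuousAt_log (hc_spec t ht).ne').continuousWithinAt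
  have hnorm : ‖cfc Real.log c‖ = Real.log (max m⁻¹ M) := by
    have hgr := IsGreatest.norm_cfc Real.log c hlog_cont hc_sa
    have heq : (fun x : ℝ => ‖Real.log x‖) = fun x : ℝ => |Real.log x| :=
      funext fun x => Real.norm_eq_abs _
    rw [heq] at hgr
    exact hgr.unique (isGreatest_abs_log hK hne hc_spec)
  rw [thompsonDist, hMab, hMba, hnorm]
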